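/- Let H be a strongly primary monoid that is not half-factorial. Then L(H) ≠ L(B(G₀)) for any subset G₀ of any abelian group; in particular, H is not a transfer Krull monoid. -/

import Mathlib

open Classical

/-- The set of factorization lengths of `a` into irreducible elements (atoms);
by convention `{0}` for invertible elements. -/
noncomputable def mLengths {H : Type*} [Monoid H] (a : H) : Set ℕ :=
  if IsUnit a then {0}
  else {n | ∃ l : List H, l.length = n ∧ (∀ x ∈ l, Irreducible x) ∧ l.prod = a}

/-- A commutative cancellative monoid `M` is strongly primary if it has a non-unit and for
every non-unit `a` there is `n ∈ ℕ` such that every product of `n` non-units lies in `aM`. -/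
def StronglyPrimary (M : Type*) [CancelCommMonoid M] : Prop :=
  (∃ a : M, ¬IsUnit a) ∧
    ∀ a : M, ¬IsUnit a → ∃ n : ℕ, 0 < n ∧
      ∀ l : List M, l.length = n → (∀ x ∈ l, ¬IsUnit x) → a ∣ l.prod

/-- `S` is a minimal zero-sum sequence over `G`. -/
def IsMinZS {G : Type*} [AddCommGroup G] (S : Multiset G) : Prop :=
  S ≠ 0 ∧ S.sum = 0 ∧ ∀ T : Multiset G, T ≤ S → T ≠ 0 → T ≠ S → T.sum ≠ 0

/-- `S` is a minimal zero-sum sequence with all terms in `G₀`, i.e. an atom of `𝓑(G₀)`. -/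
def IsMinZSOn {G : Type*} [AddCommGroup G] (G₀ : Set G) (S : Multiset G) : Prop :=
  (∀ x ∈ S, x ∈ G₀) ∧ IsMinZS S

/-- The set of factorization lengths of `S` into atoms of the monoid `𝓑(G₀)`. -/
def ZSLengthsOn {G : Type*} [AddCommGroup G] (G₀ : Set G) (S : Multiset G) : Set ℕ :=
  {n | ∃ l : Multiset (Multiset G),
    Multiset.card l = n ∧ (∀ T ∈ l, IsMinZSOn G₀ T) ∧ l.sum = S}

/-! ### Auxiliary results on the `H` side -/

section Hside

variable {H : Type*} [CancelCommMonoid H]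

lemma aux_notUnit_prod {l : List H} (hne : l ≠ []) (hl : ∀ x ∈ l, ¬IsUnit x) :
    ¬IsUnit l.prod := by
  cases l with
  | nil => exact absurd rfl hne
  | cons x xs =>
    intro hu
    rw [List.prod_cons] at hu
    exact hl x (List.mem_cons_self (a := x) (l := xs)) (isUnit_of_mul_isUnit_left hu)

/-- In a strongly primary monoid, lengths of factorizations of `x` into non-units are
bounded by the strong-primariness exponent of `x`. -/
lemma aux_length_bound {x : H} {N : ℕ}
    (hdvd : ∀ l : List H, l.length = N → (∀ y ∈ l, ¬IsUnit y) → x ∣ l.prod) :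
    ∀ l : List H, (∀ y ∈ l, ¬IsUnit y) → l.prod = x → l.length ≤ N := by
  intro l hl hp
  by_contra hlen
  push_neg at hlen
  have htake : (l.take N).length = N := by
    rw [List.length_take]
    exact Nat.min_eq_left hlen.le
  have hdvd' : x ∣ (l.take N).prod :=
    hdvd (l.take N) htake (fun y hy => hl y (List.take_subset N l hy))
  obtain ⟨z, hz⟩ := hdvd'
  have hsplit : (l.take N).prod * (l.drop N).prod = l.prod := List.prod_take_mul_prod_drop l N
  have hxx : x * (z * (l.drop N).prod) = x * 1 := by
    rw [mul_one, ← mul_assoc, ← hz, hsplit, hp]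
  have hone : z * (l.drop N).prod = 1 := mul_left_cancel hxx
  have hdropne : l.drop N ≠ [] := by
    intro h
    have := List.length_drop (i := N) (l := l)
    rw [h] at this
    simp at this
    omega
  exact aux_notUnit_prod hdropne (fun y hy => hl y (List.drop_subset N l hy))
    (IsUnit.of_mul_eq_one (a := (l.drop N).prod) z (by rw [mul_comm]; exact hone))

/-- Strongly primary monoids are atomic. -/
lemma aux_atomic (hsp : StronglyPrimary H) {x : H} (hx : ¬IsUnit x) :
    ∃ l : List H, (∀ y ∈ l, Irreducible y) ∧ l.prod = x ∧ 0 < l.length := by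
  classical
  obtain ⟨N, hN, hdvd⟩ := hsp.2 x hx
  set P : ℕ → Prop :=
    fun j => ∃ l : List H, l.length = j ∧ (∀ y ∈ l, ¬IsUnit y) ∧ l.prod = x with hP
  have hbound : ∀ j, P j → j ≤ N := by
    rintro j ⟨l, hlen, hl, hp⟩
    rw [← hlen]
    exact aux_length_bound hdvd l hl hp
  have hP1 : P 1 := ⟨[x], rfl, by simpa using hx, by simp⟩
  set jm := Nat.findGreatest P N with hjm
  have hPjm : P jm := Nat.findGreatest_spec hN hP1
  have hjm1 : 1 ≤ jm := Nat.le_findGreatest hN hP1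
  obtain ⟨l, hlen, hl, hp⟩ := hPjm
  refine ⟨l, ?_, hp, by omega⟩
  intro y hy
  by_contra hnirr
  rw [irreducible_iff] at hnirr
  push_neg at hnirr
  obtain ⟨a, b, hab, ha, hb⟩ := hnirr (hl y hy)
  have hPsucc : P (jm + 1) := by
    have hyl : (l.erase y).length = l.length - 1 := List.length_erase_of_mem hy
    have hposl : 0 < l.length := List.length_pos_iff.mpr (List.ne_nil_of_mem hy)
    refine ⟨a :: b :: l.erase y, by simp only [List.length_cons, hyl, hlen]; omega, ?_, ?_⟩
    · intro z hz
      rcases List.mem_cons.mp hz with hz | hz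
      · rw [hz]; exact ha
      rcases List.mem_cons.mp hz with hz' | hz'
      · rw [hz']; exact hb
      · exact hl z (List.erase_subset hz')
    · have := List.prod_erase hy
      calc (a :: b :: l.erase y).prod = (a * b) * (l.erase y).prod := by
            simp [List.prod_cons, mul_assoc]
        _ = y * (l.erase y).prod := by rw [← hab]
        _ = l.prod := this
        _ = x := hp
  have := hbound _ hPsucc
  exact absurd hPsucc (Nat.findGreatest_is_greatest (by omega) this)

lemma aux_mem_mLengths {a : H} (ha : ¬IsUnit a) {l : List H}
    (hl : ∀ y ∈ l, Irreducible y) (hp : l.prod = a) : l.length ∈ mLengths a := by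
  rw [mLengths, if_neg ha]
  exact ⟨l, rfl, hl, hp⟩

/-- The key property of strongly primary non-half-factorial monoids: singleton sets of
lengths are bounded. -/
lemma aux_no_big_singleton {H : Type*} [CancelCommMonoid H] (hsp : StronglyPrimary H)
    {b : H} (hb : ¬IsUnit b)
    {m n : ℕ} (hm : m ∈ mLengths b) (hn : n ∈ mLengths b) (hmn : m ≠ n) :
    ∃ M : ℕ, 0 < M ∧ ∀ k, M < k → ∀ a : H, mLengths a ≠ {k} := by
  classical
  obtain ⟨N, hN, hdvd⟩ := hsp.2 b hb
  refine ⟨N, hN, fun k hk a hEq => ?_⟩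
  by_cases ha : IsUnit a
  · rw [mLengths, if_pos ha] at hEq
    have : (0 : ℕ) ∈ ({k} : Set ℕ) := by rw [← hEq]; rfl
    simp at this
    omega
  -- a is not a unit; get a factorization of length k
  have hkmem : k ∈ mLengths a := by rw [hEq]; rfl
  rw [mLengths, if_neg ha] at hkmem
  obtain ⟨l, hlen, hlirr, hlp⟩ := hkmem
  -- extract b from the first N atoms
  have htake : (l.take N).length = N := by
    rw [List.length_take]; omega
  have hdvd' : b ∣ (l.take N).prod :=
    hdvd _ htake (fun y hy => (hlirr y (List.take_subset N l hy)).not_isUnit)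
  obtain ⟨w, hw⟩ := hdvd'
  have hab : a = b * (w * (l.drop N).prod) := by
    rw [← hlp, ← List.prod_take_mul_prod_drop l N, hw, mul_assoc]
  set d := w * (l.drop N).prod with hd
  -- factorizations of b of lengths m and n
  rw [mLengths, if_neg hb] at hm hn
  obtain ⟨Lm, hLmlen, hLmirr, hLmp⟩ := hm
  obtain ⟨Ln, hLnlen, hLnirr, hLnp⟩ := hn
  have hLm_ne : Lm ≠ [] := by
    intro h; rw [h] at hLmp; exact hb (by rw [← hLmp]; simp)
  have hLn_ne : Ln ≠ [] := by
    intro h; rw [h] at hLnp; exact hb (by rw [← hLnp]; simp)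
  by_cases hud : IsUnit d
  · -- multiply the unit `d` into the head of a factorization of `b`
    have key : ∀ L : List H, L ≠ [] → (∀ y ∈ L, Irreducible y) → L.prod = b →
        L.length ∈ mLengths a := by
      intro L hLne hLirr hLp
      obtain ⟨y, L', rfl⟩ := List.exists_cons_of_ne_nil hLne
      have hirr : Irreducible (y * d) :=
        Associated.irreducible ⟨hud.unit, by rw [IsUnit.unit_spec]⟩ (hLirr y (by simp))
      have hmem : ((y * d) :: L').length ∈ mLengths a := by
        refine aux_mem_mLengths ha ?_ ?_
        · intro z hz
          rcases List.mem_cons.mp hz with hz | hz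
          · rw [hz]; exact hirr
          · exact hLirr z (by simp [hz])
        · rw [List.prod_cons, hab, ← hLp, List.prod_cons]
          exact mul_right_comm y d L'.prod
      simpa using hmem
    have h1 := key Lm hLm_ne hLmirr hLmp
    have h2 := key Ln hLn_ne hLnirr hLnp
    rw [hLmlen, hEq, Set.mem_singleton_iff] at h1
    rw [hLnlen, hEq, Set.mem_singleton_iff] at h2
    exact hmn (h1.trans h2.symm)
  · -- factor `d` into atoms as well
    obtain ⟨Ld, hLdirr, hLdp, _⟩ := aux_atomic hsp hud
    have key : ∀ L : List H, (∀ y ∈ L, Irreducible y) → L.prod = b →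
        L.length + Ld.length ∈ mLengths a := by
      intro L hLirr hLp
      have hmem : (L ++ Ld).length ∈ mLengths a := by
        refine aux_mem_mLengths ha ?_ ?_
        · intro z hz
          rcases List.mem_append.mp hz with hz | hz
          · exact hLirr z hz
          · exact hLdirr z hz
        · rw [List.prod_append, hLp, hLdp, hab]
      simpa using hmem
    have h1 := key Lm hLmirr hLmp
    have h2 := key Ln hLnirr hLnp
    rw [hLmlen, hEq, Set.mem_singleton_iff] at h1
    rw [hLnlen, hEq, Set.mem_singleton_iff] at h2
    omega


end Hside

/-! ### Auxiliary results on the `𝓑(G₀)` side -/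

section Bside

variable {G : Type*} [AddCommGroup G]

/-- Every nonzero zero-sum sequence contains a minimal zero-sum sequence. -/
lemma aux_exists_minZS_le {Z : Multiset G} (h0 : Z ≠ 0) (hs : Z.sum = 0) :
    ∃ W, W ≤ Z ∧ IsMinZS W := by
  classical
  have main : ∀ (c : ℕ) (Z : Multiset G), Multiset.card Z ≤ c → Z ≠ 0 → Z.sum = 0 →
      ∃ W, W ≤ Z ∧ IsMinZS W := by
    intro c
    induction c with
    | zero =>
      intro Z hc h0 _
      exact absurd (Multiset.card_eq_zero.mp (Nat.le_zero.mp hc)) h0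
    | succ c ih =>
      intro Z hc h0 hs
      by_cases hmin : IsMinZS Z
      · exact ⟨Z, le_refl Z, hmin⟩
      · rw [IsMinZS] at hmin
        push_neg at hmin
        obtain ⟨T, hTle, hT0, hTne, hTs⟩ := hmin h0 hs
        have hcard : Multiset.card T < Multiset.card Z :=
          Multiset.card_lt_card (lt_of_le_of_ne hTle hTne)
        obtain ⟨W, hWle, hW⟩ := ih T (by omega) hT0 hTs
        exact ⟨W, le_trans hWle hTle, hW⟩
  exact main (Multiset.card Z) Z le_rfl h0 hs

/-- Uniqueness of the atom with support-minimal support. -/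
lemma aux_atom_unique {U T : Multiset G} (hU : IsMinZS U) (hT : IsMinZS T)
    (hsupp : T.toFinset = U.toFinset)
    (hmin : ∀ W : Multiset G, IsMinZS W → (∀ x ∈ W, x ∈ U.toFinset) → U.toFinset ⊆ W.toFinset) :
    T = U := by
  classical
  obtain ⟨g, hg⟩ := Multiset.exists_mem_of_ne_zero hU.1
  have hSne : U.toFinset.Nonempty := ⟨g, Multiset.mem_toFinset.mpr hg⟩
  -- choose g₀ minimizing the ratio (count in T)/(count in U)
  obtain ⟨g₀, hg₀S, hg₀min⟩ :=
    U.toFinset.exists_min_image (fun g => (T.count g : ℚ) / (U.count g : ℚ)) hSne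
  set p := T.count g₀ with hp
  set q := U.count g₀ with hq
  have hqpos : 0 < q := Multiset.count_pos.mpr (Multiset.mem_toFinset.mp hg₀S)
  have key : ∀ x : G, p * U.count x ≤ q * T.count x := by
    intro x
    by_cases hx : x ∈ U.toFinset
    · have hupos : 0 < U.count x := Multiset.count_pos.mpr (Multiset.mem_toFinset.mp hx)
      have hr := hg₀min x hx
      rw [div_le_div_iff₀ (by exact_mod_cast hqpos) (by exact_mod_cast hupos)] at hr
      have : (p : ℚ) * (U.count x : ℚ) ≤ (q : ℚ) * (T.count x : ℚ) := by
        push_cast at hr ⊢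
        linarith
      exact_mod_cast this
    · have : U.count x = 0 := by
        rw [Multiset.count_eq_zero]
        exact fun hmem => hx (Multiset.mem_toFinset.mpr hmem)
      simp [this]
  have hle : p • U ≤ q • T := by
    rw [Multiset.le_iff_count]
    intro x
    rw [Multiset.count_nsmul, Multiset.count_nsmul]
    exact key x
  set Z := q • T - p • U with hZ
  have hZadd : p • U + Z = q • T := add_tsub_cancel_of_le hle
  have hZsum : Z.sum = 0 := by
    have := congrArg Multiset.sum hZadd
    rw [Multiset.sum_add, Multiset.sum_nsmul, Multiset.sum_nsmul, hU.2.1, hT.2.1] at this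
    simpa using this
  have hZcount : Z.count g₀ = 0 := by
    rw [hZ, Multiset.count_sub, Multiset.count_nsmul, Multiset.count_nsmul, ← hp, ← hq]
    simp [Nat.mul_comm]
  by_cases hZ0 : Z = 0
  · -- `q • T = p • U`, so T and U are proportional
    have heq : q • T = p • U := by
      have h1 : q • T ≤ p • U := tsub_eq_zero_iff_le.mp hZ0
      exact le_antisymm h1 hle
    have hcnt : ∀ x : G, q * T.count x = p * U.count x := by
      intro x
      have := congrArg (Multiset.count x) heq
      rwa [Multiset.count_nsmul, Multiset.count_nsmul] at this
    rcases lt_trichotomy p q with hpq | hpq | hpq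
    · -- T is a proper subsequence of U, contradicting minimality of U
      exfalso
      have hTleU : T ≤ U := by
        rw [Multiset.le_iff_count]
        intro x
        have := hcnt x
        nlinarith [this, hpq]
      have hTneU : T ≠ U := by
        intro h
        rw [h] at hp
        omega
      exact hU.2.2 T hTleU hT.1 hTneU hT.2.1
    · -- p = q, so T = U
      have hppos : 0 < p := by omega
      ext x
      have := hcnt x
      rw [← hpq] at this
      exact Nat.eq_of_mul_eq_mul_left hppos this
    · -- U is a proper subsequence of T, contradicting minimality of T
      exfalso
      have hUleT : U ≤ T := by
        rw [Multiset.le_iff_count]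
        intro x
        have := hcnt x
        nlinarith [this, hpq]
      have hUneT : U ≠ T := by
        intro h
        rw [h] at hq
        omega
      exact hT.2.2 U hUleT hU.1 hUneT hU.2.1
  · -- Z is a nonzero zero-sum supported in U.toFinset \ {g₀} : contradiction
    exfalso
    obtain ⟨W, hWZ, hW⟩ := aux_exists_minZS_le hZ0 hZsum
    have hWmem : ∀ x ∈ W, x ∈ U.toFinset := by
      intro x hx
      have hxZ : x ∈ Z := Multiset.mem_of_le hWZ hx
      have hxqT : x ∈ q • T := Multiset.mem_of_le (tsub_le_self) hxZ
      have hxT : x ∈ T := ((Multiset.mem_nsmul).mp hxqT).2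
      rw [← hsupp]
      exact Multiset.mem_toFinset.mpr hxT
    have hsub := hmin W hW hWmem
    have : g₀ ∈ W := Multiset.mem_toFinset.mp (hsub hg₀S)
    have : g₀ ∈ Z := Multiset.mem_of_le hWZ this
    rw [← Multiset.count_pos, hZcount] at this
    omega

/-- Existence of an atom `U` all of whose powers have a unique factorization. -/
lemma aux_good_atom {G₀ : Set G} {U₀ : Multiset G} (hU₀ : IsMinZSOn G₀ U₀) :
    ∃ U : Multiset G, IsMinZSOn G₀ U ∧ ∀ k : ℕ, 0 < k → ZSLengthsOn G₀ (k • U) = {k} := by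
  classical
  set A : Multiset G → Prop :=
    fun T => IsMinZSOn G₀ T ∧ T.toFinset ⊆ U₀.toFinset with hA
  set C : ℕ → Prop := fun c => ∃ T, A T ∧ T.toFinset.card = c with hC
  have hCne : C U₀.toFinset.card := ⟨U₀, ⟨hU₀, subset_refl _⟩, rfl⟩
  obtain ⟨U, hUA, hUcard⟩ := Nat.find_spec (⟨_, hCne⟩ : ∃ c, C c)
  have hUatom : IsMinZSOn G₀ U := hUA.1
  -- minimality of the support of U
  have hkey : ∀ W : Multiset G, IsMinZS W → (∀ x ∈ W, x ∈ U.toFinset) →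
      U.toFinset ⊆ W.toFinset := by
    intro W hW hWmem
    have hWsub : W.toFinset ⊆ U.toFinset := by
      intro x hx
      exact hWmem x (Multiset.mem_toFinset.mp hx)
    have hWA : A W := by
      constructor
      · constructor
        · intro x hx
          exact hUatom.1 x (Multiset.mem_toFinset.mp (hWmem x hx))
        · exact hW
      · exact subset_trans hWsub hUA.2
    have hcard : U.toFinset.card ≤ W.toFinset.card := by
      rw [hUcard]
      exact Nat.find_min' _ ⟨W, hWA, rfl⟩
    rw [Finset.eq_of_subset_of_card_le hWsub hcard]
  refine ⟨U, hUatom, fun k hk => ?_⟩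
  ext n
  simp only [ZSLengthsOn, Set.mem_setOf_eq, Set.mem_singleton_iff]
  constructor
  · rintro ⟨l, hlcard, hlatoms, hlsum⟩
    -- every atom in the factorization equals U
    have hall : ∀ T ∈ l, T = U := by
      intro T hT
      have hTatom := hlatoms T hT
      have hTle : T ≤ k • U := by
        rw [← hlsum]
        exact Multiset.le_sum_of_mem hT
      have hTmem : ∀ x ∈ T, x ∈ U.toFinset := by
        intro x hx
        have : x ∈ k • U := Multiset.mem_of_le hTle hx
        exact Multiset.mem_toFinset.mpr ((Multiset.mem_nsmul).mp this).2
      have hsub : T.toFinset ⊆ U.toFinset := fun x hx =>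
        hTmem x (Multiset.mem_toFinset.mp hx)
      have hsup := hkey T hTatom.2 hTmem
      exact aux_atom_unique hUatom.2 hTatom.2
        (le_antisymm hsub hsup) hkey
    have hrepl : l = Multiset.replicate (Multiset.card l) U :=
      Multiset.eq_replicate_card.mpr hall
    have hsum : (Multiset.card l) • U = k • U := by
      rw [← Multiset.sum_replicate, ← hrepl, hlsum]
    obtain ⟨g, hg⟩ := Multiset.exists_mem_of_ne_zero hUatom.2.1
    have hcpos : 0 < U.count g := Multiset.count_pos.mpr hg
    have := congrArg (Multiset.count g) hsum
    rw [Multiset.count_nsmul, Multiset.count_nsmul] at this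
    rw [← hlcard]
    exact Nat.eq_of_mul_eq_mul_right hcpos this
  · rintro rfl
    refine ⟨Multiset.replicate n U, Multiset.card_replicate _ _, ?_, Multiset.sum_replicate n U⟩
    intro T hT
    rw [Multiset.eq_of_mem_replicate hT]
    exact hUatom

end Bside

/-- If `H` is a strongly primary monoid that is not half-factorial, then the system of sets
of lengths of `H` differs from the system of sets of lengths of the monoid of zero-sum
sequences `𝓑(G₀)` for every subset `G₀` of every abelian group `G`; in particular `H` is not
a transfer Krull monoid. -/
theorem stmt8 {H : Type*} [CancelCommMonoid H] (hsp : StronglyPrimary H)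
    (hnhf : ∃ a : H, ∃ m ∈ mLengths a, ∃ n ∈ mLengths a, m ≠ n) :
    ∀ (G : Type*) [AddCommGroup G] (G₀ : Set G),
      {L : Set ℕ | ∃ a : H, L = mLengths a} ≠
        {L : Set ℕ | ∃ B : Multiset G,
          (∀ x ∈ B, x ∈ G₀) ∧ B.sum = 0 ∧ L = ZSLengthsOn G₀ B} := by
  classical
  intro G _ G₀ hEq
  obtain ⟨a₀, m, hm, n, hn, hmn⟩ := hnhf
  have ha₀ : ¬IsUnit a₀ := by
    intro h
    rw [mLengths, if_pos h, Set.mem_singleton_iff] at hm hn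
    exact hmn (hm.trans hn.symm)
  -- bound on singleton sets of lengths in H
  obtain ⟨M, hMpos, hM⟩ := aux_no_big_singleton hsp ha₀ hm hn hmn
  -- `mLengths a₀` belongs to the right-hand system
  have h1 : mLengths a₀ ∈ {L : Set ℕ | ∃ B : Multiset G,
      (∀ x ∈ B, x ∈ G₀) ∧ B.sum = 0 ∧ L = ZSLengthsOn G₀ B} := by
    rw [← hEq]
    exact ⟨a₀, rfl⟩
  obtain ⟨B, hBG, hBsum, hBL⟩ := h1
  -- extract an atom of 𝓑(G₀)
  have hmaxmem : max m n ∈ ZSLengthsOn G₀ B := by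
    rw [← hBL]
    rcases max_choice m n with h | h <;> rw [h]
    · exact hm
    · exact hn
  obtain ⟨l, hlcard, hlatoms, _⟩ := hmaxmem
  have hmaxpos : 0 < max m n := by omega
  have hlne : l ≠ 0 := by
    intro h
    rw [h] at hlcard
    simp at hlcard
    omega
  obtain ⟨T₀, hT₀⟩ := Multiset.exists_mem_of_ne_zero hlne
  obtain ⟨U, hUatom, hUk⟩ := aux_good_atom (hlatoms T₀ hT₀)
  -- the singleton {M+1} is in the right-hand system, hence in the left-hand one
  have h2 : ({M + 1} : Set ℕ) ∈ {L : Set ℕ | ∃ B : Multiset G,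
      (∀ x ∈ B, x ∈ G₀) ∧ B.sum = 0 ∧ L = ZSLengthsOn G₀ B} := by
    refine ⟨(M + 1) • U, ?_, ?_, (hUk (M + 1) (by omega)).symm⟩
    · intro x hx
      exact hUatom.1 x ((Multiset.mem_nsmul).mp hx).2
    · rw [Multiset.sum_nsmul, hUatom.2.2.1, smul_zero]
  rw [← hEq] at h2
  obtain ⟨a, ha⟩ := h2
  exact hM (M + 1) (by omega) a ha.symm
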